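/- Let H=(V,E,w) be a directed hypergraph, let σ be a linear order on V, and let f ∈ ℝ^V be consistent with σ (i.e., u <_σ v implies f_u ≤ f_v). Let E(σ) := { e ∈ E : the σ-maximum element of T_e is σ-strictly greater than the σ-minimum element of H_e }. Define g ∈ ℝ^V by g_x := Σ_{e∈E(σ) : x is the σ-maximum of T_e} w_e·Δ_e(f) − Σ_{e∈E(σ) : x is the σ-minimum of H_e} w_e·Δ_e(f). Then g is a subgradient of the quadratic form Q at f: for every h ∈ ℝ^V, Q(h) ≥ Q(f) + Σ_{x∈V} g_x·(h_x − f_x). -/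

import Mathlib

open Finset
open scoped Classical

noncomputable section

structure DirHyp (V E : Type) [Fintype V] [Fintype E] where
  Tl : E → Finset V
  Hd : E → Finset V
  w : E → ℝ
  Tl_ne : ∀ e, (Tl e).Nonempty
  Hd_ne : ∀ e, (Hd e).Nonempty
  w_nonneg : ∀ e, 0 ≤ w e

variable {V E : Type} [Fintype V] [DecidableEq V] [Fintype E]

/-- Discrepancy of edge `e` w.r.t. density `f`. -/
def disc (G : DirHyp V E) (f : V → ℝ) (e : E) : ℝ :=
  (G.Tl e).sup' (G.Tl_ne e) f - (G.Hd e).inf' (G.Hd_ne e) f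

/-- Weighted degree of vertex `u`. -/
def vw (G : DirHyp V E) (u : V) : ℝ :=
  ∑ e : E, if u ∈ G.Tl e ∪ G.Hd e then G.w e else 0

/-- The quadratic form `Q(f) = (1/2) Σ_e w_e ([Δ_e(f)]⁺)²`. -/
def Qform (G : DirHyp V E) (f : V → ℝ) : ℝ :=
  (1 / 2) * ∑ e : E, G.w e * (max (disc G f e) 0) ^ 2

/-- The gradient of the quadratic form restricted to the linear order `σ`:
`g_x = Σ_{e ∈ E(σ) : x = σ-max of T_e} w_e Δ_e(f) − Σ_{e ∈ E(σ) : x = σ-min of H_e} w_e Δ_e(f)`,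
where `E(σ)` is the set of edges whose `σ`-maximum tail vertex is `σ`-strictly
greater than its `σ`-minimum head vertex. -/
def gradSigma (G : DirHyp V E) (σ : LinearOrder V) (f : V → ℝ) (x : V) : ℝ :=
  (∑ e ∈ Finset.univ.filter
      (fun e : E =>
        σ.lt (@Finset.min' V σ (G.Hd e) (G.Hd_ne e)) (@Finset.max' V σ (G.Tl e) (G.Tl_ne e)) ∧
        x = @Finset.max' V σ (G.Tl e) (G.Tl_ne e)),
    G.w e * disc G f e)
  - (∑ e ∈ Finset.univ.filter
      (fun e : E =>
        σ.lt (@Finset.min' V σ (G.Hd e) (G.Hd_ne e)) (@Finset.max' V σ (G.Tl e) (G.Tl_ne e)) ∧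
        x = @Finset.min' V σ (G.Hd e) (G.Hd_ne e)),
    G.w e * disc G f e)

/-- if `f` is consistent with the linear order `σ`, then
`∇Q_σ(f)` is a subgradient of `Q` at `f`. -/
theorem gradSigma_subgradient (G : DirHyp V E) (σ : LinearOrder V) (f : V → ℝ)
    (hcons : ∀ u v : V, σ.lt u v → f u ≤ f v) :
    ∀ h : V → ℝ, Qform G h ≥ Qform G f + ∑ x : V, gradSigma G σ f x * (h x - f x) := by
  intro h
  classical
  letI := σ
  set A : E → V := fun e => (G.Tl e).max' (G.Tl_ne e) with hA
  set B : E → V := fun e => (G.Hd e).min' (G.Hd_ne e) with hB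
  set P : E → Prop := fun e => B e < A e with hP
  have hfA : ∀ e, (G.Tl e).sup' (G.Tl_ne e) f = f (A e) := by
    intro e
    apply le_antisymm
    · apply Finset.sup'_le
      intro u hu
      rcases eq_or_lt_of_le (Finset.le_max' _ u hu) with h1 | h1
      · exact le_of_eq (by rw [h1])
      · exact hcons _ _ h1
    · exact Finset.le_sup' f (Finset.max'_mem _ _)
  have hfB : ∀ e, (G.Hd e).inf' (G.Hd_ne e) f = f (B e) := by
    intro e
    apply le_antisymm
    · exact Finset.inf'_le f (Finset.min'_mem _ _)
    · apply Finset.le_inf'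
      intro u hu
      rcases eq_or_lt_of_le (Finset.min'_le _ u hu) with h1 | h1
      · exact le_of_eq (congrArg f h1)
      · exact hcons _ _ h1
  -- the swap lemma
  have swap : ∀ (M : E → V) (r : V → ℝ),
      (∑ x : V, ∑ e ∈ Finset.univ.filter (fun e => P e ∧ x = M e), (G.w e * disc G f e) * r x)
        = ∑ e ∈ Finset.univ.filter P, (G.w e * disc G f e) * r (M e) := by
    intro M r
    rw [Finset.sum_comm' (t' := Finset.univ.filter P)
        (s' := fun e => Finset.univ.filter (fun x => x = M e)) (t := fun x =>
          Finset.univ.filter (fun e => P e ∧ x = M e))]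
    · apply Finset.sum_congr rfl
      intro e _
      rw [Finset.filter_eq']
      simp
    · intro x e
      simp only [Finset.mem_filter, Finset.mem_univ, true_and]
      tauto
  have hsum : (∑ x : V, gradSigma G σ f x * (h x - f x))
      = ∑ e ∈ Finset.univ.filter P,
          (G.w e * disc G f e) * ((h (A e) - f (A e)) - (h (B e) - f (B e))) := by
    have : ∀ x, gradSigma G σ f x * (h x - f x)
        = (∑ e ∈ Finset.univ.filter (fun e => P e ∧ x = A e), (G.w e * disc G f e) * (h x - f x))
          - (∑ e ∈ Finset.univ.filter (fun e => P e ∧ x = B e), (G.w e * disc G f e) * (h x - f x)) := by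
      intro x
      rw [gradSigma, sub_mul, ← Finset.sum_mul, ← Finset.sum_mul]
    rw [Finset.sum_congr rfl (fun x _ => this x), Finset.sum_sub_distrib,
      swap A (fun x => h x - f x), swap B (fun x => h x - f x), ← Finset.sum_sub_distrib]
    apply Finset.sum_congr rfl
    intro e _
    ring
  rw [hsum]
  -- rewrite the filtered sum as a full sum of ite
  rw [Finset.sum_filter]
  rw [Qform, Qform, Finset.mul_sum, Finset.mul_sum, ← Finset.sum_add_distrib]
  apply Finset.sum_le_sum
  intro e _
  have hw := G.w_nonneg e
  have hDh : h (A e) - h (B e) ≤ disc G h e := by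
    rw [disc]
    have h1 : h (A e) ≤ (G.Tl e).sup' (G.Tl_ne e) h := Finset.le_sup' h (Finset.max'_mem _ _)
    have h2 : (G.Hd e).inf' (G.Hd_ne e) h ≤ h (B e) := Finset.inf'_le h (Finset.min'_mem _ _)
    linarith
  have hdf : disc G f e = f (A e) - f (B e) := by rw [disc, hfA, hfB]
  by_cases hPe : P e
  · rw [if_pos hPe]
    have hΔ : 0 ≤ disc G f e := by
      rw [hdf]; linarith [hcons _ _ hPe]
    have hmf : max (disc G f e) 0 = disc G f e := max_eq_left hΔ
    have hM : h (A e) - h (B e) ≤ max (disc G h e) 0 := le_trans hDh (le_max_left _ _)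
    rw [hmf]
    have hrw : h (A e) - f (A e) - (h (B e) - f (B e))
        = (h (A e) - h (B e)) - disc G f e := by rw [hdf]; ring
    rw [hrw]
    nlinarith [mul_nonneg hw (sq_nonneg (max (disc G h e) 0 - disc G f e)),
      mul_nonneg (mul_nonneg hw hΔ) (sub_nonneg.2 hM)]
  · rw [if_neg hPe, add_zero]
    have hle : A e ≤ B e := le_of_not_gt hPe
    have hfle : f (A e) ≤ f (B e) := by
      rcases eq_or_lt_of_le hle with h1 | h1
      · exact le_of_eq (by rw [h1])
      · exact hcons _ _ h1
    have : max (disc G f e) 0 = 0 := max_eq_right (by rw [hdf]; linarith)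
    rw [this]
    have := mul_nonneg hw (sq_nonneg (max (disc G h e) 0))
    nlinarith
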